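/- Let G be a graph properly 4-colored by c, and let x, y be two vertices at distance at least 6 with c(x) ≠ c(y). Recolor every vertex at distance exactly 1 or 2 from y that has color c(y) with a new fifth color, then perform a Kempe (c(x),c(y))-interchange on the component of the (c(x),c(y))-subgraph containing y. The result is a proper 5-coloring in which x and y receive the same color and no vertex within distance 2 of x changed its color. -/

import Mathlib

open SimpleGraph

/-- A closed walk is chordless (induced) if every adjacency of `G` between vertices of
the walk is an edge of the walk. -/
def WalkChordless {V : Type} {G : SimpleGraph V} {x : V} (c : G.Walk x x) : Prop :=
  ∀ ⦃a b : V⦄, a ∈ c.support → b ∈ c.support → G.Adj a b → s(a, b) ∈ c.edges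

/-- Distance (in `ℕ∞`, `⊤` if unreachable) from a set of vertices to a vertex. -/
noncomputable def setDist {V : Type} (G : SimpleGraph V) (A : Set V) (v : V) : ℕ∞ :=
  sInf {n : ℕ∞ | ∃ a ∈ A, ∃ p : G.Walk a v, (p.length : ℕ∞) = n}

/-- Distance (in `ℕ∞`) between two sets of vertices. -/
noncomputable def setSetDist {V : Type} (G : SimpleGraph V) (A B : Set V) : ℕ∞ :=
  sInf {n : ℕ∞ | ∃ a ∈ A, ∃ b ∈ B, ∃ p : G.Walk a b, (p.length : ℕ∞) = n}

/-- `K` is a minor of `H`: disjoint nonempty connected branch sets joined as in `K`. -/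
def HasGraphMinor {W W' : Type} (H : SimpleGraph W) (K : SimpleGraph W') : Prop :=
  ∃ f : W' → Set W,
    (∀ i, (f i).Nonempty) ∧ (∀ i, (H.induce (f i)).Connected) ∧
    (Pairwise fun i j => Disjoint (f i) (f j)) ∧
    (∀ ⦃i j : W'⦄, K.Adj i j → ∃ a ∈ f i, ∃ b ∈ f j, H.Adj a b)

/-- Planarity via Wagner's theorem: no `K₅` and no `K₃,₃` minor. -/
def IsPlanar {W : Type} (H : SimpleGraph W) : Prop :=
  ¬ HasGraphMinor H (completeGraph (Fin 5)) ∧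
  ¬ HasGraphMinor H (completeBipartiteGraph (Fin 3) (Fin 3))

/-- Abstract data of a 2-cell embedding of a simple graph `G` in a surface:
Euler genus, orientability, contractibility/homotopy of closed walks, faces,
sidedness, local left/right neighbours along walks, and interiors of
contractible cycles. -/
structure SurfaceEmbedding {V : Type} (G : SimpleGraph V) where
  eulerGenus : ℕ
  orientable : Prop
  IsCellular : Prop
  IsTriangulation : Prop
  Contractible : ∀ ⦃x : V⦄, G.Walk x x → Prop
  TwoSided : ∀ ⦃x : V⦄, G.Walk x x → Prop
  Homotopic : ∀ ⦃x y : V⦄, G.Walk x x → G.Walk y y → Prop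
  BoundsFace : ∀ ⦃x : V⦄, G.Walk x x → Prop
  rightAt : ∀ ⦃a b : V⦄, G.Walk a b → V → Set V
  leftAt : ∀ ⦃a b : V⦄, G.Walk a b → V → Set V
  rightAt_adj : ∀ ⦃a b : V⦄ (p : G.Walk a b) (v u : V), u ∈ rightAt p v → G.Adj v u
  leftAt_adj : ∀ ⦃a b : V⦄ (p : G.Walk a b) (v u : V), u ∈ leftAt p v → G.Adj v u
  Inside : ∀ ⦃x : V⦄, G.Walk x x → Set V

namespace SurfaceEmbedding

variable {V : Type} {G : SimpleGraph V}

/-- A noncontractible cycle of the embedding. -/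
def IsNCCycle (emb : SurfaceEmbedding G) {x : V} (c : G.Walk x x) : Prop :=
  c.IsCycle ∧ ¬ emb.Contractible c

/-- The width (edge-width) of the embedding: length of a shortest noncontractible cycle. -/
noncomputable def width (emb : SurfaceEmbedding G) : ℕ∞ :=
  sInf {n : ℕ∞ | ∃ (x : V) (c : G.Walk x x), emb.IsNCCycle c ∧ (c.length : ℕ∞) = n}

/-- `c` is a shortest noncontractible cycle. -/
def IsShortestNC (emb : SurfaceEmbedding G) {x : V} (c : G.Walk x x) : Prop :=
  emb.IsNCCycle c ∧ ∀ ⦃y : V⦄ (e : G.Walk y y), emb.IsNCCycle e → c.length ≤ e.length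

/-- A witness of length `n` for `ncdist`: either a noncontractible cycle meeting `c`
in exactly one vertex, or a path with both ends on `c`, interior disjoint from `c`,
forming a noncontractible cycle with every arc of `c` between its endpoints. -/
def IsNCDistWitness (emb : SurfaceEmbedding G) {x : V} (c : G.Walk x x) (n : ℕ) : Prop :=
  (∃ (a : V) (P : G.Walk a a), a ∈ c.support ∧ P.IsCycle ∧
      (∀ v ∈ P.support, v ∈ c.support → v = a) ∧ ¬ emb.Contractible P ∧ P.length = n) ∨
  (∃ (a b : V) (P : G.Walk a b), a ≠ b ∧ a ∈ c.support ∧ b ∈ c.support ∧ P.IsPath ∧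
      (∀ v ∈ P.support, v ∈ c.support → v = a ∨ v = b) ∧
      (∀ Q : G.Walk b a, Q.IsPath → Q.edges ⊆ c.edges → ¬ emb.Contractible (P.append Q)) ∧
      P.length = n)

/-- `ncdist` of a cycle: minimum length of an `ncdist` witness (`⊤` if none exists). -/
noncomputable def ncdist (emb : SurfaceEmbedding G) {x : V} (c : G.Walk x x) : ℕ∞ :=
  sInf {n : ℕ∞ | ∃ m : ℕ, emb.IsNCDistWitness c m ∧ (m : ℕ∞) = n}

/-- Right neighbours of a walk. -/
def RightNbrs (emb : SurfaceEmbedding G) {a b : V} (p : G.Walk a b) : Set V :=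
  {u | ∃ v ∈ p.support, u ∈ emb.rightAt p v}

/-- Left neighbours of a walk. -/
def LeftNbrs (emb : SurfaceEmbedding G) {a b : V} (p : G.Walk a b) : Set V :=
  {u | ∃ v ∈ p.support, u ∈ emb.leftAt p v}

/-- `R^k(C)`: vertices at distance exactly `k` from `C` reached by a shortest path
whose first edge leaves `C` to the right. -/
def Rlevel (emb : SurfaceEmbedding G) {x : V} (c : G.Walk x x) (k : ℕ) : Set V :=
  {v | setDist G {w | w ∈ c.support} v = (k : ℕ∞) ∧
    ∃ u ∈ c.support, ∃ p : G.Walk u v, p.IsPath ∧ p.length = k ∧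
      p.getVert 1 ∈ emb.RightNbrs c}

/-- `L^k(C)`: vertices at distance exactly `k` from `C` reached by a shortest path
whose first edge leaves `C` to the left. -/
def Llevel (emb : SurfaceEmbedding G) {x : V} (c : G.Walk x x) (k : ℕ) : Set V :=
  {v | setDist G {w | w ∈ c.support} v = (k : ℕ∞) ∧
    ∃ u ∈ c.support, ∃ p : G.Walk u v, p.IsPath ∧ p.length = k ∧
      p.getVert 1 ∈ emb.LeftNbrs c}

/-- The `k`-th canonical cycle of `x`: a contractible cycle `D` with `x` inside, all
of whose vertices are at distance exactly `k` from `x`, joined to `x` by paths of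
length `k` inside the closed disk bounded by `D`. -/
def IsCanonicalCycle (emb : SurfaceEmbedding G) (x : V) (k : ℕ) {y : V}
    (D : G.Walk y y) : Prop :=
  D.IsCycle ∧ emb.Contractible D ∧ x ∈ emb.Inside D ∧
  (∀ z ∈ D.support, G.dist x z = k) ∧
  (∀ z ∈ D.support, ∃ p : G.Walk x z, p.length = k ∧
     ∀ v ∈ p.support, v ∈ emb.Inside D ∨ v ∈ D.support)

/-- The result of cutting the embedded graph `G` along a chordless noncontractible
cycle `C` and capping with apex vertices: a new embedded graph `G'` together with
the projection back to `G` (apex vertices project to `none`). -/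
structure Cutting (emb : SurfaceEmbedding G) {x : V} (C : G.Walk x x) where
  V' : Type
  G' : SimpleGraph V'
  emb' : SurfaceEmbedding G'
  proj : V' → Option V
  proj_edge : ∀ ⦃a b : V'⦄, G'.Adj a b → ∀ u v : V,
    proj a = some u → proj b = some v → G.Adj u v
  tri : emb.IsTriangulation → emb'.IsTriangulation

/-- Cutting along a 2-sided cycle yields two apex vertices, one for each side. -/
structure TwoSidedCutting (emb : SurfaceEmbedding G) {x : V} (C : G.Walk x x)
    extends Cutting emb C where
  apexR : toCutting.V'
  apexL : toCutting.V'
  apexR_proj : toCutting.proj apexR = none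
  apexL_proj : toCutting.proj apexL = none
  apex_ne : apexR ≠ apexL

/-- A 6-shortcut for a cycle `C`: a path `P` of length 6 with both ends on `C`,
together with an arc `A` of `C`, so that `P.append A` is a noncontractible cycle
homotopic to `C`. -/
structure SixShortcut (emb : SurfaceEmbedding G) {x : V} (C : G.Walk x x) where
  a : V
  b : V
  P : G.Walk a b
  A : G.Walk b a
  P_len : P.length = 6
  P_path : P.IsPath
  ha : a ∈ C.support
  hb : b ∈ C.support
  arc_sub : A.edges ⊆ C.edges
  arc_path : A.IsPath
  cyc : (P.append A).IsCycle
  noncontr : ¬ emb.Contractible (P.append A)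
  homot : emb.Homotopic (P.append A) C

/-- The cycle `C'` produced by a 6-shortcut. -/
def SixShortcut.newCycle {emb : SurfaceEmbedding G} {x : V} {C : G.Walk x x}
    (s : SixShortcut emb C) : G.Walk s.a s.a := s.P.append s.A

/-- A 6-shortcut is optimal if the resulting cycle is as short as possible. -/
def SixShortcut.IsOptimal {emb : SurfaceEmbedding G} {x : V} {C : G.Walk x x}
    (s : SixShortcut emb C) : Prop :=
  ∀ t : SixShortcut emb C, s.newCycle.length ≤ t.newCycle.length

/-- A contractible 4-cycle bounds two triangular faces sharing a diagonal. -/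
def IsDoubleTriangle (emb : SurfaceEmbedding G) {y : V} (D : G.Walk y y) : Prop :=
  ∃ (a c : V), G.Adj a c ∧ a ∈ D.support ∧ c ∈ D.support ∧ s(a, c) ∉ D.edges ∧
    ∃ (T₁ T₂ : G.Walk a a), T₁.IsCycle ∧ T₂.IsCycle ∧ T₁.length = 3 ∧ T₂.length = 3 ∧
      emb.BoundsFace T₁ ∧ emb.BoundsFace T₂ ∧ s(a, c) ∈ T₁.edges ∧ s(a, c) ∈ T₂.edges ∧
      (∀ v ∈ T₁.support, v ∈ D.support) ∧ (∀ v ∈ T₂.support, v ∈ D.support) ∧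
      (∀ e ∈ D.edges, e ∈ T₁.edges ∨ e ∈ T₂.edges)

/-- A 4-cycle is the first neighbour circuit of a vertex of degree 4. -/
def IsFirstNbrCircuit (emb : SurfaceEmbedding G) {y : V} (D : G.Walk y y) : Prop :=
  ∃ v : V, (G.neighborSet v).ncard = 4 ∧ G.neighborSet v = {w | w ∈ D.support} ∧
    v ∈ emb.Inside D

/-- The induced subgraph on `U` is orderly: every contractible 3-cycle in `U` bounds
a face, and every contractible 4-cycle in `U` bounds two triangles sharing an edge
or is the first neighbour circuit of a vertex of degree 4. -/
def Orderly (emb : SurfaceEmbedding G) (U : Set V) : Prop :=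
  (∀ ⦃y : V⦄ (D : G.Walk y y), D.IsCycle → (∀ v ∈ D.support, v ∈ U) → D.length = 3 →
      emb.Contractible D → emb.BoundsFace D) ∧
  (∀ ⦃y : V⦄ (D : G.Walk y y), D.IsCycle → (∀ v ∈ D.support, v ∈ U) → D.length = 4 →
      emb.Contractible D → emb.IsDoubleTriangle D ∨ emb.IsFirstNbrCircuit D)

/-- A witness for `ctdist` of a 2-sided cycle `C`: a path (or cycle) with both ends
on `C`, interior disjoint from `C`, starting with an edge on one side of `C` and
ending with an edge on the other side. -/
def IsCrossWitness (emb : SurfaceEmbedding G) {x : V} (C : G.Walk x x)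
    {a b : V} (P : G.Walk a b) : Prop :=
  a ∈ C.support ∧ b ∈ C.support ∧ 1 ≤ P.length ∧
  (∀ v ∈ P.support, v ∈ C.support → v = a ∨ v = b) ∧
  ((P.getVert 1 ∈ emb.RightNbrs C ∧ P.getVert (P.length - 1) ∈ emb.LeftNbrs C) ∨
   (P.getVert 1 ∈ emb.LeftNbrs C ∧ P.getVert (P.length - 1) ∈ emb.RightNbrs C)) ∧
  (∀ h : a = b, (P.copy rfl h.symm).IsCycle) ∧ (a ≠ b → P.IsPath)

/-- `ctdist` of a 2-sided cycle: minimum length of a side-crossing witness. -/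
noncomputable def ctdist (emb : SurfaceEmbedding G) {x : V} (C : G.Walk x x) : ℕ∞ :=
  sInf {n : ℕ∞ | ∃ (a b : V) (P : G.Walk a b),
    emb.IsCrossWitness C P ∧ (P.length : ℕ∞) = n}

end SurfaceEmbedding

/-- Reachability within a set of vertices. -/
def reachIn {V : Type} (G : SimpleGraph V) (T : Set V) (u v : V) : Prop :=
  ∃ p : G.Walk u v, ∀ w ∈ p.support, w ∈ T

open Classical in
/-- The recoloring of the proof: recolor every vertex at distance 1 or 2 from `y`
having color `c y` with the new color 5, then perform a Kempe
`(c x, c y)`-interchange on the component containing `y`. -/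
noncomputable def kempeRecolor {V : Type} (G : SimpleGraph V) (c : V → ℕ)
    (x y : V) : V → ℕ :=
  let c₁ : V → ℕ := fun v =>
    if (G.dist y v = 1 ∨ G.dist y v = 2) ∧ c v = c y then 5 else c v
  let T : Set V := {v | c₁ v = c x ∨ c₁ v = c y}
  fun v => if v ∈ T ∧ reachIn G T y v then (if c₁ v = c x then c y else c x) else c₁ v

open Classical in
/-- The first-stage recoloring used inside `kempeRecolor`. -/
noncomputable def kc1 {V : Type} (G : SimpleGraph V) (c : V → ℕ) (y : V) (v : V) : ℕ :=
  if (G.dist y v = 1 ∨ G.dist y v = 2) ∧ c v = c y then 5 else c v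

/-- The Kempe-chain vertex set used inside `kempeRecolor`. -/
def kT {V : Type} (G : SimpleGraph V) (c : V → ℕ) (x y : V) : Set V :=
  {v | kc1 G c y v = c x ∨ kc1 G c y v = c y}

open Classical in
lemma kempeRecolor_eq {V : Type} (G : SimpleGraph V) (c : V → ℕ) (x y v : V) :
    kempeRecolor G c x y v =
      if v ∈ kT G c x y ∧ reachIn G (kT G c x y) y v
      then (if kc1 G c y v = c x then c y else c x) else kc1 G c y v := by
  unfold kempeRecolor
  congr

section aux
variable {V : Type} {G : SimpleGraph V} {c : V → ℕ} {x y : V}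

lemma kc1_cases (v : V) : kc1 G c y v = c v ∨ kc1 G c y v = 5 := by
  unfold kc1; split_ifs <;> simp

lemma kc1_eq_of_ne (v : V) (h : ¬((G.dist y v = 1 ∨ G.dist y v = 2) ∧ c v = c y)) :
    kc1 G c y v = c v := by
  unfold kc1; rw [if_neg h]

lemma c_ne_five (hrange : ∀ v, c v ∈ ({1, 2, 3, 4} : Set ℕ)) (v : V) : c v ≠ 5 := by
  intro hv; have := hrange v; rw [hv] at this
  simp [Set.mem_insert_iff] at this

lemma kc1_eq_cx (hrange : ∀ v, c v ∈ ({1, 2, 3, 4} : Set ℕ)) (v : V)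
    (h : kc1 G c y v = c x) : c v = c x := by
  rcases kc1_cases (G := G) (c := c) (y := y) v with h' | h'
  · rw [← h', h]
  · exact absurd (h' ▸ h).symm (c_ne_five hrange x)

lemma kc1_eq_cy (hrange : ∀ v, c v ∈ ({1, 2, 3, 4} : Set ℕ)) (v : V)
    (h : kc1 G c y v = c y) : c v = c y ∧ ¬(G.dist y v = 1 ∨ G.dist y v = 2) := by
  unfold kc1 at h
  split_ifs at h with hc
  · exact absurd h.symm (c_ne_five hrange y)
  · refine ⟨h, fun hd => hc ⟨hd, h⟩⟩

/-- Any walk inside the Kempe set starting in the small set `{y} ∪ {c x-colored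
neighbours of y}` stays in that small set. -/
lemma kempe_key (hrange : ∀ v, c v ∈ ({1, 2, 3, 4} : Set ℕ))
    (hproper : ∀ ⦃p q : V⦄, G.Adj p q → c p ≠ c q) :
    ∀ {u v : V} (p : G.Walk u v), (∀ w ∈ p.support, w ∈ kT G c x y) →
      (u = y ∨ (G.Adj y u ∧ c u = c x)) → (v = y ∨ (G.Adj y v ∧ c v = c x)) := by
  intro u v p
  induction p with
  | nil => exact fun _ h => h
  | @cons u w v h q ih =>
    intro hT hu
    have hwT : w ∈ kT G c x y := hT w (by simp)
    have hqT : ∀ z ∈ q.support, z ∈ kT G c x y := fun z hz => hT z (by simp [hz])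
    apply ih hqT
    rcases hu with rfl | ⟨hadj, hcu⟩
    · rcases hwT with hw | hw
      · exact Or.inr ⟨h, kc1_eq_cx hrange w hw⟩
      · exact absurd (kc1_eq_cy hrange w hw).1.symm (hproper h)
    · rcases hwT with hw | hw
      · exact absurd ((kc1_eq_cx hrange w hw) ▸ hcu) (hproper h)
      · rcases kc1_eq_cy hrange w hw with ⟨hcw, hnd⟩
        by_cases hwy : w = y
        · exact Or.inl hwy
        · exfalso
          have hdle : G.dist y w ≤ 2 := by
            have := SimpleGraph.dist_le
              (SimpleGraph.Walk.cons hadj (SimpleGraph.Walk.cons h SimpleGraph.Walk.nil))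
            simpa using this
          have hdne : G.dist y w ≠ 0 :=
            SimpleGraph.dist_ne_zero_iff_ne_and_reachable.mpr
              ⟨Ne.symm hwy, ⟨SimpleGraph.Walk.cons hadj (SimpleGraph.Walk.cons h SimpleGraph.Walk.nil)⟩⟩
          exact hnd (by omega)

end aux


lemma kc1_eq_five {V : Type} {G : SimpleGraph V} {c : V → ℕ} {y : V}
    (hrange : ∀ v, c v ∈ ({1, 2, 3, 4} : Set ℕ)) (v : V)
    (h : kc1 G c y v = 5) : c v = c y := by
  unfold kc1 at h
  split_ifs at h with hc
  · exact hc.2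
  · exact absurd h (c_ne_five hrange v)

/-- starting from a proper 4-coloring `c` and vertices `x, y` at
distance at least 6 with `c x ≠ c y`, the recoloring-plus-Kempe-interchange yields a
proper 5-coloring in which `x` and `y` get the same color and no vertex within
distance 2 of `x` changed its color. -/
theorem kempe_recolor_identifies_colors
    {V : Type} (G : SimpleGraph V) (c : V → ℕ)
    (hrange : ∀ v, c v ∈ ({1, 2, 3, 4} : Set ℕ))
    (hproper : ∀ ⦃p q : V⦄, G.Adj p q → c p ≠ c q)
    (x y : V) (hxy : c x ≠ c y)
    (hdist : ∀ p : G.Walk x y, 6 ≤ p.length) :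
    (∀ ⦃p q : V⦄, G.Adj p q → kempeRecolor G c x y p ≠ kempeRecolor G c x y q) ∧
    kempeRecolor G c x y x = kempeRecolor G c x y y ∧
    (∀ v, (∃ p : G.Walk x v, p.length ≤ 2) → kempeRecolor G c x y v = c v) ∧
    (∀ v, kempeRecolor G c x y v ∈ ({1, 2, 3, 4, 5} : Set ℕ)) := by
  classical
  have h5 := c_ne_five hrange
  have hnear : ∀ v : V, (G.dist y v = 1 ∨ G.dist y v = 2) →
      ∃ q : G.Walk y v, q.length ≤ 2 := by
    intro v hv
    have hne : G.dist y v ≠ 0 := by rcases hv with h | h <;> omega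
    obtain ⟨q, hq⟩ := SimpleGraph.exists_walk_of_dist_ne_zero hne
    exact ⟨q, by rcases hv with h | h <;> omega⟩
  have hc1x : kc1 G c y x = c x := kc1_eq_of_ne x (fun h => hxy h.2)
  have hc1y : kc1 G c y y = c y := by
    apply kc1_eq_of_ne y
    rw [SimpleGraph.dist_self]
    rintro ⟨h | h, -⟩ <;> simp at h
  have hxT : x ∈ kT G c x y := Or.inl hc1x
  have hyT : y ∈ kT G c x y := Or.inr hc1y
  have hreachS : ∀ v, reachIn G (kT G c x y) y v →
      (v = y ∨ (G.Adj y v ∧ c v = c x)) := by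
    rintro v ⟨p, hp⟩
    exact kempe_key hrange hproper p hp (Or.inl rfl)
  have hxnr : ¬ reachIn G (kT G c x y) y x := by
    intro h
    rcases hreachS x h with rfl | ⟨hadj, -⟩
    · exact hxy rfl
    · have := hdist (SimpleGraph.Walk.cons hadj.symm SimpleGraph.Walk.nil)
      simp at this
  refine ⟨?_, ?_, ?_, ?_⟩
  · -- properness
    intro p q hadj
    rw [kempeRecolor_eq, kempeRecolor_eq]
    by_cases hp : p ∈ kT G c x y ∧ reachIn G (kT G c x y) y p <;>
      by_cases hq : q ∈ kT G c x y ∧ reachIn G (kT G c x y) y q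
    · rw [if_pos hp, if_pos hq]
      rcases hreachS p hp.2 with hpy | ⟨hpadj, hcp⟩ <;>
        rcases hreachS q hq.2 with hqy | ⟨hqadj, hcq⟩
      · exact absurd (hpy.trans hqy.symm) hadj.ne
      · have hp' : kc1 G c y p = c y := by rw [hpy]; exact hc1y
        have hq' : kc1 G c y q = c q := by
          apply kc1_eq_of_ne q
          rintro ⟨-, h⟩
          exact hxy (hcq ▸ h)
        rw [hp', if_neg (fun h => hxy h.symm), hq', if_pos hcq]
        exact hxy
      · have hq' : kc1 G c y q = c y := by rw [hqy]; exact hc1y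
        have hp' : kc1 G c y p = c p := by
          apply kc1_eq_of_ne p
          rintro ⟨-, h⟩
          exact hxy (hcp ▸ h)
        rw [hp', if_pos hcp, hq', if_neg (fun h => hxy h.symm)]
        exact fun h => hxy h.symm
      · exact absurd (hcp.trans hcq.symm) (hproper hadj)
    · have hqT : q ∉ kT G c x y := by
        intro hqmem
        rcases hp.2 with ⟨w, hw⟩
        refine hq ⟨hqmem, ⟨w.concat hadj, ?_⟩⟩
        intro z hz
        rw [SimpleGraph.Walk.support_concat,
          List.mem_append, List.mem_singleton] at hz
        rcases hz with h | rfl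
        · exact hw z h
        · exact hqmem
      have hqT' : ¬(kc1 G c y q = c x ∨ kc1 G c y q = c y) := hqT
      push_neg at hqT'
      rw [if_pos hp, if_neg hq]
      split_ifs with h
      · exact fun he => hqT'.2 he.symm
      · exact fun he => hqT'.1 he.symm
    · have hpT : p ∉ kT G c x y := by
        intro hpmem
        rcases hq.2 with ⟨w, hw⟩
        refine hp ⟨hpmem, ⟨w.concat hadj.symm, ?_⟩⟩
        intro z hz
        rw [SimpleGraph.Walk.support_concat,
          List.mem_append, List.mem_singleton] at hz
        rcases hz with h | rfl
        · exact hw z h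
        · exact hpmem
      have hpT' : ¬(kc1 G c y p = c x ∨ kc1 G c y p = c y) := hpT
      push_neg at hpT'
      rw [if_neg hp, if_pos hq]
      split_ifs with h
      · exact fun he => hpT'.2 he
      · exact fun he => hpT'.1 he
    · rw [if_neg hp, if_neg hq]
      rcases kc1_cases (G := G) (c := c) (y := y) p with h1 | h1 <;>
        rcases kc1_cases (G := G) (c := c) (y := y) q with h2 | h2 <;>
          rw [h1, h2]
      · exact hproper hadj
      · exact h5 p
      · exact (h5 q).symm
      · intro _
        exact hproper hadj
          ((kc1_eq_five hrange p h1).trans (kc1_eq_five hrange q h2).symm)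
  · -- x and y get the same color
    have hry : reachIn G (kT G c x y) y y :=
      ⟨SimpleGraph.Walk.nil, by simpa using hyT⟩
    rw [kempeRecolor_eq, kempeRecolor_eq,
      if_neg (fun h => hxnr h.2), if_pos ⟨hyT, hry⟩, hc1x, hc1y,
      if_neg (fun h => hxy h.symm)]
  · -- vertices near x are unchanged
    rintro v ⟨p, hp⟩
    have hc1v : kc1 G c y v = c v := by
      apply kc1_eq_of_ne v
      rintro ⟨hd, -⟩
      obtain ⟨q, hq⟩ := hnear v hd
      have := hdist (p.append q.reverse)
      rw [SimpleGraph.Walk.length_append, SimpleGraph.Walk.length_reverse] at this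
      omega
    have hnr : ¬(v ∈ kT G c x y ∧ reachIn G (kT G c x y) y v) := by
      rintro ⟨-, hr⟩
      rcases hreachS v hr with rfl | ⟨hadj, -⟩
      · have := hdist p; omega
      · have := hdist (p.concat hadj.symm)
        rw [SimpleGraph.Walk.length_concat] at this
        omega
    rw [kempeRecolor_eq, if_neg hnr, hc1v]
  · -- range
    intro v
    have hmem : ∀ w : V, c w ∈ ({1, 2, 3, 4, 5} : Set ℕ) := by
      intro w
      have := hrange w
      simp only [Set.mem_insert_iff, Set.mem_singleton_iff] at this ⊢
      tauto
    rw [kempeRecolor_eq]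
    split_ifs
    · exact hmem y
    · exact hmem x
    · rcases kc1_cases (G := G) (c := c) (y := y) v with h | h <;> rw [h]
      · exact hmem v
      · simp
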